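/- Let n ≥ 2, q > 2, and suppose f: H^n → [0,∞) is a radial decreasing function satisfying f(r) ≤ A·(1+r)^{(n−1)/2} e^{−((n−1)/2) r} for all r ≥ 0. Then f ∈ L^{q,1}(H^n) with ‖f‖_{L^{q,1}} ≤ C_q A, where L^{q,1} is the Lorentz space. In particular, ∫_0^1 f(r)^α r^{αn/q − 1} dr and ∫_1^∞ f(r)^α e^{(α(n−1)/q) r} dr are finite for α = 1 whenever q > 2. -/

import Mathlib

open MeasureTheory

/-- The volume of a ball of radius `r` in `H^n` (up to the fixed constant `cn`). -/
noncomputable def ballVol (n : ℕ) (cn : ℝ) (r : ℝ) : ℝ :=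
  cn * ∫ s in (0:ℝ)..r, (Real.sinh s) ^ (n - 1)

lemma aux_sinh_le_mul_exp {r : ℝ} (hr : 0 ≤ r) : Real.sinh r ≤ r * Real.exp r := by
  have h1 : (-(2*r)) + 1 ≤ Real.exp (-(2*r)) := Real.add_one_le_exp _
  have h2 : Real.exp (-r) = Real.exp r * Real.exp (-(2*r)) := by
    rw [← Real.exp_add]; ring_nf
  have h3 : Real.exp r * ((-(2*r)) + 1) ≤ Real.exp r * Real.exp (-(2*r)) :=
    mul_le_mul_of_nonneg_left h1 (Real.exp_pos r).le
  rw [← h2] at h3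
  rw [Real.sinh_eq]
  nlinarith [Real.exp_pos r]

lemma aux_sinh_le_exp (r : ℝ) : Real.sinh r ≤ Real.exp r := by
  rw [Real.sinh_eq]
  have := Real.exp_pos (-r)
  have := Real.exp_pos r
  linarith

lemma aux_exp_le_sinh {x : ℝ} (hx : 1/2 ≤ x) :
    (1 - Real.exp (-1))/2 * Real.exp x ≤ Real.sinh x := by
  have h1 : Real.exp (-(2*x)) ≤ Real.exp (-1) := Real.exp_le_exp.2 (by linarith)
  have h2 : Real.exp (-x) = Real.exp x * Real.exp (-(2*x)) := by
    rw [← Real.exp_add]; ring_nf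
  have h3 : Real.exp x * Real.exp (-(2*x)) ≤ Real.exp x * Real.exp (-1) :=
    mul_le_mul_of_nonneg_left h1 (Real.exp_pos x).le
  rw [← h2] at h3
  rw [Real.sinh_eq]
  nlinarith [Real.exp_pos x]

lemma aux_one_add_le {c : ℝ} (r : ℝ) (hc : 0 < c) (hr : 0 ≤ r) :
    1 + r ≤ (Real.exp c / c) * Real.exp (c * r) := by
  have h := Real.add_one_le_exp (c * (1 + r))
  have he : Real.exp (c * (1 + r)) = Real.exp c * Real.exp (c * r) := by
    rw [← Real.exp_add]; ring_nf
  rw [div_mul_eq_mul_div, le_div_iff₀ hc]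
  nlinarith

lemma aux_poly {m c r : ℝ} (hm : 0 ≤ m) (hc : 0 < c) (hr : 0 ≤ r) :
    (1 + r) ^ m ≤ (Real.exp c / c) ^ m * Real.exp (c * m * r) := by
  have h0 : (0:ℝ) ≤ 1 + r := by linarith
  calc (1 + r) ^ m ≤ ((Real.exp c / c) * Real.exp (c * r)) ^ m :=
        Real.rpow_le_rpow h0 (aux_one_add_le r hc hr) hm
    _ = (Real.exp c / c) ^ m * (Real.exp (c * r)) ^ m :=
        Real.mul_rpow (by positivity) (Real.exp_nonneg _)
    _ = (Real.exp c / c) ^ m * Real.exp (c * m * r) := by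
        rw [← Real.exp_mul]; ring_nf

lemma ballVol_pos (n : ℕ) {cn : ℝ} (hcn : 0 < cn) {r : ℝ} (hr : 0 < r) :
    0 < ballVol n cn r := by
  unfold ballVol
  apply mul_pos hcn
  apply intervalIntegral.intervalIntegral_pos_of_pos_on
  · exact (Real.continuous_sinh.pow _).intervalIntegrable _ _
  · intro x hx; exact pow_pos (Real.sinh_pos_iff.2 hx.1) _
  · exact hr

lemma ballVol_lb_small (n : ℕ) (hn : 1 ≤ n) {cn : ℝ} (hcn : 0 < cn) {r : ℝ} (hr : 0 ≤ r) :
    cn * (r ^ n / n) ≤ ballVol n cn r := by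
  unfold ballVol
  apply mul_le_mul_of_nonneg_left _ hcn.le
  have hcast : ((n - 1 : ℕ) : ℝ) + 1 = (n : ℝ) := by
    rw [Nat.cast_sub hn]; push_cast; ring
  have h1 : ∫ s in (0:ℝ)..r, s ^ (n-1) = r ^ n / n := by
    rw [integral_pow]
    rw [show n - 1 + 1 = n from by omega, zero_pow (by omega : n ≠ 0), hcast]
    ring
  rw [← h1]
  apply intervalIntegral.integral_mono_on hr
  · exact intervalIntegral.intervalIntegrable_pow _
  · exact (Real.continuous_sinh.pow _).intervalIntegrable _ _
  · intro x hx; exact pow_le_pow_left₀ hx.1 (Real.self_le_sinh_iff.2 hx.1) _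

noncomputable def lbc (n : ℕ) : ℝ :=
  ((1 - Real.exp (-1))/2 * Real.exp (-(1:ℝ)/2)) ^ (n-1) / 2

lemma one_sub_exp_neg_one_pos : (0:ℝ) < 1 - Real.exp (-1) := by
  have : Real.exp (-1) < Real.exp 0 := Real.exp_lt_exp.2 (by norm_num)
  rw [Real.exp_zero] at this
  linarith

lemma lbc_pos (n : ℕ) : 0 < lbc n := by
  unfold lbc
  have := one_sub_exp_neg_one_pos
  positivity

lemma ballVol_lb_large (n : ℕ) (hn : 1 ≤ n) {cn : ℝ} (hcn : 0 < cn) {r : ℝ} (hr : 1 ≤ r) :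
    cn * (lbc n * Real.exp (((n:ℝ) - 1) * r)) ≤ ballVol n cn r := by
  unfold ballVol
  apply mul_le_mul_of_nonneg_left _ hcn.le
  set a := r - 1/2 with ha_def
  have ha : 1/2 ≤ a := by simp only [ha_def]; linarith
  have ha0 : 0 ≤ a := le_trans (by norm_num) ha
  have har : a ≤ r := by simp only [ha_def]; linarith
  have hcont : Continuous fun s : ℝ => Real.sinh s ^ (n-1) := Real.continuous_sinh.pow _
  have hsplit : (∫ s in (0:ℝ)..a, Real.sinh s ^ (n-1)) + (∫ s in a..r, Real.sinh s ^ (n-1))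
      = ∫ s in (0:ℝ)..r, Real.sinh s ^ (n-1) :=
    intervalIntegral.integral_add_adjacent_intervals (hcont.intervalIntegrable _ _)
      (hcont.intervalIntegrable _ _)
  have hI1 : 0 ≤ ∫ s in (0:ℝ)..a, Real.sinh s ^ (n-1) :=
    intervalIntegral.integral_nonneg ha0
      (fun u hu => pow_nonneg (Real.sinh_nonneg_iff.2 hu.1) _)
  have hsa : (1 - Real.exp (-1))/2 * Real.exp (-(1:ℝ)/2) * Real.exp r ≤ Real.sinh a := by
    have h1 := aux_exp_le_sinh ha
    have h2 : Real.exp a = Real.exp (-(1:ℝ)/2) * Real.exp r := by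
      rw [← Real.exp_add]; congr 1; simp only [ha_def]; ring
    rw [h2] at h1
    linarith [h1]
  have hb0 : 0 ≤ (1 - Real.exp (-1))/2 * Real.exp (-(1:ℝ)/2) * Real.exp r := by
    have := one_sub_exp_neg_one_pos; positivity
  have hpow : ((1 - Real.exp (-1))/2 * Real.exp (-(1:ℝ)/2)) ^ (n-1) * Real.exp (((n:ℝ)-1) * r)
      ≤ Real.sinh a ^ (n-1) := by
    have h3 := pow_le_pow_left₀ hb0 hsa (n-1)
    calc ((1 - Real.exp (-1))/2 * Real.exp (-(1:ℝ)/2)) ^ (n-1) * Real.exp (((n:ℝ)-1) * r)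
        = ((1 - Real.exp (-1))/2 * Real.exp (-(1:ℝ)/2)) ^ (n-1) * Real.exp (((n-1:ℕ):ℝ) * r) := by
          rw [Nat.cast_sub hn, Nat.cast_one]
      _ = ((1 - Real.exp (-1))/2 * Real.exp (-(1:ℝ)/2)) ^ (n-1) * Real.exp r ^ (n-1) := by
          rw [Real.exp_nat_mul]
      _ = ((1 - Real.exp (-1))/2 * Real.exp (-(1:ℝ)/2) * Real.exp r) ^ (n-1) := (mul_pow _ _ _).symm
      _ ≤ Real.sinh a ^ (n-1) := h3
  have hI2 : (1:ℝ)/2 * Real.sinh a ^ (n-1) ≤ ∫ s in a..r, Real.sinh s ^ (n-1) := by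
    have hconst : ∫ _ in a..r, Real.sinh a ^ (n-1) = (r - a) * Real.sinh a ^ (n-1) := by
      rw [intervalIntegral.integral_const, smul_eq_mul]
    have hmono : ∫ _ in a..r, Real.sinh a ^ (n-1) ≤ ∫ s in a..r, Real.sinh s ^ (n-1) := by
      apply intervalIntegral.integral_mono_on har intervalIntegrable_const
        (hcont.intervalIntegrable _ _)
      intro x hx
      exact pow_le_pow_left₀ (Real.sinh_nonneg_iff.2 ha0) (Real.sinh_le_sinh.2 hx.1) _
    have hra : r - a = 1/2 := by simp only [ha_def]; ring
    rw [hconst, hra] at hmono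
    linarith
  rw [← hsplit]
  unfold lbc
  nlinarith [hpow, hI2, hI1]

theorem radial_lorentz_estimate (n : ℕ) (hn : 2 ≤ n) (q : ℝ) (hq : 2 < q)
    (cn : ℝ) (hcn : 0 < cn) :
    ∃ C : ℝ, 0 < C ∧ ∀ (f : ℝ → ℝ) (A : ℝ),
      (∀ r : ℝ, 0 ≤ r → 0 ≤ f r) →
      AntitoneOn f (Set.Ici 0) →
      (∀ r : ℝ, 0 ≤ r →
        f r ≤ A * (1 + r) ^ (((n : ℝ) - 1) / 2) * Real.exp (-(((n : ℝ) - 1) / 2) * r)) →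
      (∫ r in Set.Ioi (0:ℝ),
          (ballVol n cn r) ^ (1 / q) * f r *
            (cn * (Real.sinh r) ^ (n - 1)) / ballVol n cn r) ≤ C * A ∧
      IntegrableOn (fun r => f r * r ^ ((n : ℝ) / q - 1)) (Set.Ioo (0:ℝ) 1) ∧
      IntegrableOn (fun r => f r * Real.exp ((((n : ℝ) - 1) / q) * r)) (Set.Ioi (1:ℝ)) := by
  have hq0 : 0 < q := by linarith
  have hqne : q ≠ 0 := ne_of_gt hq0
  have hn1 : 1 ≤ n := by omega
  have hnR : (2:ℝ) ≤ (n:ℝ) := by exact_mod_cast hn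
  have hnpos : (0:ℝ) < n := by linarith
  set p : ℝ := ((n:ℝ) - 1) / 2 with hp_def
  have hp : 0 < p := by rw [hp_def]; linarith
  have hqinv : 1/q < 1/2 := by
    rw [div_lt_div_iff₀ hq0 (by norm_num : (0:ℝ) < 2)]; linarith
  have hqinv0 : 0 < 1/q := by positivity
  set δ : ℝ := ((n:ℝ) - 1) * (1/2 - 1/q) with hδ_def
  have hδ : 0 < δ := by rw [hδ_def]; exact mul_pos (by linarith) (by linarith)
  set c : ℝ := 1/2 - 1/q with hc_def
  have hc : 0 < c := by rw [hc_def]; linarith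
  have hqe : 1/q - 1 ≤ 0 := by
    have h2 : (1:ℝ)/2 < 1 := by norm_num
    linarith
  set K1 : ℝ := 2 ^ p * (cn * Real.exp 1 ^ (n-1)) * (cn / n) ^ (1/q - 1) with hK1_def
  have hK1 : 0 < K1 := by
    rw [hK1_def]
    exact mul_pos (mul_pos (Real.rpow_pos_of_pos (by norm_num) _)
      (mul_pos hcn (pow_pos (Real.exp_pos 1) _)))
      (Real.rpow_pos_of_pos (div_pos hcn hnpos) _)
  set Kc : ℝ := (Real.exp c / c) ^ p with hKc_def
  have hKc : 0 < Kc := by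
    rw [hKc_def]; exact Real.rpow_pos_of_pos (div_pos (Real.exp_pos _) hc) _
  set K2 : ℝ := Kc * cn * (cn * lbc n) ^ (1/q - 1) with hK2_def
  have hK2 : 0 < K2 := by
    rw [hK2_def]
    exact mul_pos (mul_pos hKc hcn) (Real.rpow_pos_of_pos (mul_pos hcn (lbc_pos n)) _)
  set h : ℝ → ℝ := fun r =>
    if r ≤ 1 then K1 * r ^ ((n:ℝ)/q - 1) else K2 * Real.exp (-(δ/2) * r) with hh_def
  have hh_nonneg : ∀ r ∈ Set.Ioi (0:ℝ), 0 ≤ h r := by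
    intro r hr
    simp only [hh_def]
    split
    · exact mul_nonneg hK1.le (Real.rpow_nonneg (le_of_lt hr) _)
    · exact mul_nonneg hK2.le (Real.exp_nonneg _)
  have hint1 : IntegrableOn (fun r : ℝ => r ^ ((n:ℝ)/q - 1)) (Set.Ioc 0 1) := by
    rw [← intervalIntegrable_iff_integrableOn_Ioc_of_le zero_le_one]
    apply intervalIntegral.intervalIntegrable_rpow'
    have : 0 < (n:ℝ)/q := by positivity
    linarith
  have hint_h : IntegrableOn h (Set.Ioi 0) := by
    have hu : Set.Ioc (0:ℝ) 1 ∪ Set.Ioi 1 = Set.Ioi 0 := Set.Ioc_union_Ioi_eq_Ioi zero_le_one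
    rw [← hu]
    apply IntegrableOn.union
    · apply IntegrableOn.congr_fun (hint1.const_mul K1) _ measurableSet_Ioc
      intro x hx
      simp only [hh_def]
      rw [if_pos hx.2]
    · apply IntegrableOn.congr_fun ((exp_neg_integrableOn_Ioi 1 (half_pos hδ)).const_mul K2) _
        measurableSet_Ioi
      intro x hx
      simp only [hh_def]
      rw [if_neg (not_le.2 hx)]
  have hCint : 0 ≤ ∫ r in Set.Ioi (0:ℝ), h r :=
    setIntegral_nonneg measurableSet_Ioi hh_nonneg
  refine ⟨(∫ r in Set.Ioi (0:ℝ), h r) + 1, by linarith, ?_⟩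
  intro f A hf0 hanti hbound
  have hA : 0 ≤ A := by
    have h0 := hbound 0 le_rfl
    norm_num [Real.one_rpow] at h0
    exact (hf0 0 le_rfl).trans h0
  have hsmall : ∀ r : ℝ, 0 ≤ r → r ≤ 1 → f r ≤ A * 2 ^ p := by
    intro r hr0 hr1
    have hb := hbound r hr0
    have h2 : (1 + r) ^ p ≤ 2 ^ p := Real.rpow_le_rpow (by linarith) (by linarith) hp.le
    have h3 : Real.exp (-p * r) ≤ 1 := Real.exp_le_one_iff.2 (by nlinarith)
    calc f r ≤ A * (1 + r) ^ p * Real.exp (-p * r) := hb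
      _ ≤ A * 2 ^ p * 1 := mul_le_mul (mul_le_mul_of_nonneg_left h2 hA) h3 (Real.exp_nonneg _)
          (mul_nonneg hA (Real.rpow_nonneg (by norm_num) _))
      _ = A * 2 ^ p := mul_one _
  have key : ∀ r ∈ Set.Ioi (0:ℝ),
      ballVol n cn r ^ (1/q) * f r * (cn * Real.sinh r ^ (n-1)) / ballVol n cn r ≤ A * h r := by
    intro r hr
    have hr0 : 0 < r := hr
    have hV : 0 < ballVol n cn r := ballVol_pos n hcn hr0
    have hsnn : 0 ≤ Real.sinh r := Real.sinh_nonneg_iff.2 hr0.le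
    have hrw : ballVol n cn r ^ (1/q) * f r * (cn * Real.sinh r ^ (n-1)) / ballVol n cn r
        = f r * (cn * Real.sinh r ^ (n-1)) * ballVol n cn r ^ (1/q - 1) := by
      rw [Real.rpow_sub_one hV.ne']
      field_simp
    rw [hrw]
    simp only [hh_def]
    by_cases hr1 : r ≤ 1
    · rw [if_pos hr1]
      have hfb : f r ≤ A * 2 ^ p := hsmall r hr0.le hr1
      have hsb : cn * Real.sinh r ^ (n-1) ≤ cn * (Real.exp 1 ^ (n-1) * r ^ (n-1)) := by
        apply mul_le_mul_of_nonneg_left _ hcn.le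
        have h1 : Real.sinh r ≤ r * Real.exp 1 := by
          calc Real.sinh r ≤ r * Real.exp r := aux_sinh_le_mul_exp hr0.le
            _ ≤ r * Real.exp 1 := mul_le_mul_of_nonneg_left (Real.exp_le_exp.2 hr1) hr0.le
        calc Real.sinh r ^ (n-1) ≤ (r * Real.exp 1) ^ (n-1) := pow_le_pow_left₀ hsnn h1 _
          _ = Real.exp 1 ^ (n-1) * r ^ (n-1) := by rw [mul_pow]; ring
      have hVb : ballVol n cn r ^ (1/q - 1)
          ≤ (cn / n) ^ (1/q - 1) * r ^ ((n:ℝ) * (1/q - 1)) := by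
        have hL : 0 < cn * (r ^ n / n) := by positivity
        have h1 := Real.rpow_le_rpow_of_nonpos hL (ballVol_lb_small n hn1 hcn hr0.le) hqe
        calc ballVol n cn r ^ (1/q-1) ≤ (cn * (r ^ n / n)) ^ (1/q-1) := h1
          _ = ((cn / n) * r ^ n) ^ (1/q-1) := by
              rw [show cn * (r^n/(n:ℝ)) = (cn/(n:ℝ)) * r^n from by ring]
          _ = (cn / n) ^ (1/q-1) * (r ^ n) ^ (1/q-1) :=
              Real.mul_rpow (by positivity) (by positivity)
          _ = (cn / n) ^ (1/q-1) * r ^ ((n:ℝ) * (1/q-1)) := by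
              rw [← Real.rpow_natCast r n, ← Real.rpow_mul hr0.le]
      have hrexp : (r:ℝ) ^ (n-1) * r ^ ((n:ℝ) * (1/q - 1)) = r ^ ((n:ℝ)/q - 1) := by
        rw [← Real.rpow_natCast r (n-1), ← Real.rpow_add hr0]
        congr 1
        rw [Nat.cast_sub hn1, Nat.cast_one]
        ring
      calc f r * (cn * Real.sinh r ^ (n-1)) * ballVol n cn r ^ (1/q - 1)
          ≤ (A * 2 ^ p) * (cn * (Real.exp 1 ^ (n-1) * r ^ (n-1))) *
            ((cn / n) ^ (1/q - 1) * r ^ ((n:ℝ) * (1/q - 1))) := by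
            apply mul_le_mul (mul_le_mul hfb hsb
                (mul_nonneg hcn.le (pow_nonneg hsnn _))
                (mul_nonneg hA (Real.rpow_nonneg (by norm_num) _)))
              hVb (Real.rpow_nonneg hV.le _)
              (mul_nonneg (mul_nonneg hA (Real.rpow_nonneg (by norm_num) _)) (by positivity))
        _ = A * (K1 * r ^ ((n:ℝ)/q - 1)) := by
            rw [hK1_def, ← hrexp]; ring
    · rw [if_neg hr1]
      have h1r : (1:ℝ) < r := not_le.1 hr1
      have hfb : f r ≤ A * (Kc * Real.exp (c * p * r)) * Real.exp (-p * r) := by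
        have hb := hbound r hr0.le
        have h2 : (1 + r) ^ p ≤ Kc * Real.exp (c * p * r) := by
          rw [hKc_def]; exact aux_poly hp.le hc hr0.le
        calc f r ≤ A * (1 + r) ^ p * Real.exp (-p * r) := hb
          _ ≤ A * (Kc * Real.exp (c * p * r)) * Real.exp (-p * r) :=
            mul_le_mul_of_nonneg_right (mul_le_mul_of_nonneg_left h2 hA) (Real.exp_nonneg _)
      have hsb : cn * Real.sinh r ^ (n-1) ≤ cn * Real.exp (((n:ℝ) - 1) * r) := by
        apply mul_le_mul_of_nonneg_left _ hcn.le
        calc Real.sinh r ^ (n-1) ≤ Real.exp r ^ (n-1) :=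
              pow_le_pow_left₀ hsnn (aux_sinh_le_exp r) _
          _ = Real.exp (((n-1:ℕ):ℝ) * r) := (Real.exp_nat_mul _ _).symm
          _ = Real.exp (((n:ℝ)-1) * r) := by rw [Nat.cast_sub hn1, Nat.cast_one]
      have hVb : ballVol n cn r ^ (1/q - 1)
          ≤ (cn * lbc n) ^ (1/q - 1) * Real.exp (((n:ℝ)-1) * (1/q - 1) * r) := by
        have hL : 0 < cn * (lbc n * Real.exp (((n:ℝ)-1)*r)) :=
          mul_pos hcn (mul_pos (lbc_pos n) (Real.exp_pos _))
        have h1 := Real.rpow_le_rpow_of_nonpos hL (ballVol_lb_large n hn1 hcn h1r.le) hqe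
        calc ballVol n cn r ^ (1/q-1)
            ≤ (cn * (lbc n * Real.exp (((n:ℝ)-1)*r))) ^ (1/q-1) := h1
          _ = ((cn * lbc n) * Real.exp (((n:ℝ)-1)*r)) ^ (1/q-1) := by rw [mul_assoc]
          _ = (cn * lbc n) ^ (1/q-1) * (Real.exp (((n:ℝ)-1)*r)) ^ (1/q-1) :=
              Real.mul_rpow (mul_nonneg hcn.le (lbc_pos n).le) (Real.exp_nonneg _)
          _ = (cn * lbc n) ^ (1/q-1) * Real.exp (((n:ℝ)-1) * (1/q-1) * r) := by
              rw [← Real.exp_mul]; ring_nf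
      calc f r * (cn * Real.sinh r ^ (n-1)) * ballVol n cn r ^ (1/q - 1)
          ≤ (A * (Kc * Real.exp (c*p*r)) * Real.exp (-p*r)) * (cn * Real.exp (((n:ℝ)-1)*r)) *
            ((cn * lbc n) ^ (1/q-1) * Real.exp (((n:ℝ)-1)*(1/q-1)*r)) := by
            apply mul_le_mul (mul_le_mul hfb hsb
                (mul_nonneg hcn.le (pow_nonneg hsnn _))
                (mul_nonneg (mul_nonneg hA (by positivity)) (Real.exp_nonneg _)))
              hVb (Real.rpow_nonneg hV.le _)
              (mul_nonneg (mul_nonneg (mul_nonneg hA (by positivity)) (Real.exp_nonneg _))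
                (by positivity))
        _ = A * (K2 * Real.exp (-(δ/2) * r)) := by
            rw [hK2_def]
            have hE : Real.exp (c*p*r) * Real.exp (-p*r) * Real.exp (((n:ℝ)-1)*r) *
                Real.exp (((n:ℝ)-1)*(1/q-1)*r) = Real.exp (-(δ/2)*r) := by
              rw [← Real.exp_add, ← Real.exp_add, ← Real.exp_add]
              congr 1
              rw [hδ_def, hp_def, hc_def]
              ring
            rw [← hE]; ring
  refine ⟨?_, ?_, ?_⟩
  · calc (∫ r in Set.Ioi (0:ℝ), ballVol n cn r ^ (1/q) * f r *
          (cn * Real.sinh r ^ (n-1)) / ballVol n cn r)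
        ≤ ∫ r in Set.Ioi (0:ℝ), A * h r := by
          apply integral_mono_of_nonneg
          · filter_upwards [self_mem_ae_restrict measurableSet_Ioi] with r hr
            have hV := ballVol_pos n hcn (Set.mem_Ioi.1 hr)
            have hr0 : (0:ℝ) < r := hr
            exact div_nonneg (mul_nonneg (mul_nonneg (Real.rpow_nonneg hV.le _)
              (hf0 r hr0.le)) (mul_nonneg hcn.le
              (pow_nonneg (Real.sinh_nonneg_iff.2 hr0.le) _))) hV.le
          · exact hint_h.const_mul A
          · filter_upwards [self_mem_ae_restrict measurableSet_Ioi] with r hr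
            exact key r hr
      _ = A * ∫ r in Set.Ioi (0:ℝ), h r := integral_const_mul A h
      _ ≤ ((∫ r in Set.Ioi (0:ℝ), h r) + 1) * A := by nlinarith
  · apply Integrable.mono' ((hint1.mono_set Set.Ioo_subset_Ioc_self).const_mul (A * 2 ^ p))
    · apply AEStronglyMeasurable.mul
      · exact (aemeasurable_restrict_of_antitoneOn measurableSet_Ioo
          (hanti.mono (fun x hx => le_of_lt hx.1))).aestronglyMeasurable
      · apply ContinuousOn.aestronglyMeasurable _ measurableSet_Ioo
        apply ContinuousOn.rpow_const continuousOn_id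
        intro x hx
        exact Or.inl (ne_of_gt hx.1)
    · filter_upwards [self_mem_ae_restrict measurableSet_Ioo] with r hr
      have h1 : 0 ≤ f r := hf0 r hr.1.le
      have h2 : 0 ≤ r ^ ((n:ℝ)/q - 1) := Real.rpow_nonneg hr.1.le _
      rw [Real.norm_eq_abs, abs_of_nonneg (mul_nonneg h1 h2)]
      exact mul_le_mul_of_nonneg_right (hsmall r hr.1.le hr.2.le) h2
  · apply Integrable.mono' ((exp_neg_integrableOn_Ioi 1 (half_pos hδ)).const_mul (A * Kc))
    · apply AEStronglyMeasurable.mul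
      · exact (aemeasurable_restrict_of_antitoneOn measurableSet_Ioi
          (hanti.mono (fun x hx => le_trans zero_le_one (le_of_lt hx)))).aestronglyMeasurable
      · exact (Real.continuous_exp.comp (continuous_const.mul continuous_id)).aestronglyMeasurable
    · filter_upwards [self_mem_ae_restrict measurableSet_Ioi] with r hr
      have hr1 : (1:ℝ) < r := hr
      have hr0 : (0:ℝ) < r := lt_trans zero_lt_one hr1
      have h1 : 0 ≤ f r := hf0 r hr0.le
      rw [Real.norm_eq_abs, abs_of_nonneg (mul_nonneg h1 (Real.exp_nonneg _))]
      have hb := hbound r hr0.le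
      have h2 : (1 + r) ^ p ≤ Kc * Real.exp (c*p*r) := by
        rw [hKc_def]; exact aux_poly hp.le hc hr0.le
      calc f r * Real.exp ((((n:ℝ)-1)/q) * r)
          ≤ (A * (Kc * Real.exp (c*p*r)) * Real.exp (-p*r)) *
            Real.exp ((((n:ℝ)-1)/q) * r) := by
            apply mul_le_mul_of_nonneg_right _ (Real.exp_nonneg _)
            calc f r ≤ A * (1+r)^p * Real.exp (-p*r) := hb
              _ ≤ A * (Kc * Real.exp (c*p*r)) * Real.exp (-p*r) :=
                mul_le_mul_of_nonneg_right (mul_le_mul_of_nonneg_left h2 hA) (Real.exp_nonneg _)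
        _ = A * Kc * Real.exp (-(δ/2) * r) := by
            have hE : Real.exp (c*p*r) * Real.exp (-p*r) * Real.exp ((((n:ℝ)-1)/q)*r)
                = Real.exp (-(δ/2)*r) := by
              rw [← Real.exp_add, ← Real.exp_add]
              congr 1
              rw [hδ_def, hp_def, hc_def]
              ring
            rw [← hE]; ring
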